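/- Let p ≥ 5 be prime. Let σ be the permutation of F_p given by x ↦ x + 1 and δ the permutation given by x ↦ x^(p-2). Then σ^3 ∘ δ ∘ σ^{-1} ∘ δ ∘ (σ ∘ δ)^3 ∘ σ^{-1} ∘ δ equals the permutation (0 1)(2 3), i.e., it swaps 0 with 1, swaps 2 with 3, and fixes all other elements of F_p. -/

import Mathlib

theorem stmt_11 (p : ℕ) (hp : p.Prime) (hp5 : 5 ≤ p)
    (σ δ : Equiv.Perm (ZMod p)) (hσ : ∀ x, σ x = x + 1)
    (hδ : ∀ x, δ x = x ^ (p - 2)) :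
    σ ^ 3 * δ * σ⁻¹ * δ * (σ * δ) ^ 3 * σ⁻¹ * δ =
      Equiv.swap (0 : ZMod p) 1 * Equiv.swap (2 : ZMod p) 3 := by
  haveI : Fact p.Prime := ⟨hp⟩
  have hδ' : ∀ x : ZMod p, δ x = x⁻¹ := by
    intro x
    rw [hδ]
    rcases eq_or_ne x 0 with rfl | hx
    · rw [zero_pow (by omega), inv_zero]
    · have h1 : x ^ (p - 1) = 1 := ZMod.pow_card_sub_one_eq_one hx
      field_simp
      calc x ^ (p - 2) * x = x ^ (p - 1) := by
            rw [← pow_succ]; congr 1; omega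
        _ = 1 := h1
  have hσ' : ∀ x : ZMod p, σ⁻¹ x = x - 1 := by
    intro x
    apply σ.injective
    rw [show σ (σ⁻¹ x) = x from σ.apply_symm_apply x, hσ]; ring
  have hne : ∀ n : ℕ, 0 < n → n < p → (n : ZMod p) ≠ 0 := by
    intro n hn hnp h
    rw [ZMod.natCast_eq_zero_iff] at h
    have := Nat.le_of_dvd hn h
    omega
  have h1 : (1 : ZMod p) ≠ 0 := by have := hne 1 (by omega) (by omega); simpa using this
  have h2 : (2 : ZMod p) ≠ 0 := by have := hne 2 (by omega) (by omega); simpa using this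
  have h3 : (3 : ZMod p) ≠ 0 := by have := hne 3 (by omega) (by omega); simpa using this
  have e01 : (0 : ZMod p) ≠ 1 := fun h => h1 h.symm
  have e02 : (0 : ZMod p) ≠ 2 := fun h => h2 h.symm
  have e03 : (0 : ZMod p) ≠ 3 := fun h => h3 h.symm
  have e12 : (1 : ZMod p) ≠ 2 := fun h => h1 (by linear_combination -h)
  have e13 : (1 : ZMod p) ≠ 3 := fun h => h2 (by linear_combination -h)
  have e23 : (2 : ZMod p) ≠ 3 := fun h => h1 (by linear_combination -h)
  ext x
  simp only [Equiv.Perm.mul_apply, pow_succ, pow_zero, one_mul, hδ', hσ', hσ]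
  rcases eq_or_ne x 0 with rfl | hx0
  · rw [Equiv.swap_apply_of_ne_of_ne e02 e03, Equiv.swap_apply_left]
    norm_num
    rw [show (2:ZMod p)⁻¹ - 1 = -2⁻¹ from by field_simp; ring, inv_neg, inv_inv]
    ring
  rcases eq_or_ne x 1 with rfl | hx1
  · rw [Equiv.swap_apply_of_ne_of_ne e12 e13, Equiv.swap_apply_right]
    norm_num
    rw [show (2:ZMod p)⁻¹ + 1 = (3:ZMod p) * 2⁻¹ from by field_simp; ring,
      mul_inv, inv_inv,
      show (3:ZMod p)⁻¹ * 2 - 1 = -3⁻¹ from by field_simp; ring,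
      inv_neg, inv_inv]
    ring
  rcases eq_or_ne x 2 with rfl | hx2
  · rw [Equiv.swap_apply_left, Equiv.swap_apply_of_ne_of_ne h3 e13.symm]
    rw [show (2:ZMod p)⁻¹ - 1 = -2⁻¹ from by field_simp; ring, inv_neg, inv_inv,
      show (-2:ZMod p) + 1 = -1 from by ring,
      show ((-1:ZMod p))⁻¹ = -1 from by rw [inv_neg, inv_one],
      show (-1:ZMod p) + 1 = 0 from by ring, inv_zero, zero_add, inv_one, sub_self,
      inv_zero]
    ring
  rcases eq_or_ne x 3 with rfl | hx3
  · rw [Equiv.swap_apply_right, Equiv.swap_apply_of_ne_of_ne h2 e12.symm]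
    rw [show (3:ZMod p)⁻¹ - 1 = -(2*3⁻¹) from by field_simp; ring, inv_neg, mul_inv, inv_inv,
      show -((2:ZMod p)⁻¹*3) + 1 = -2⁻¹ from by field_simp; ring,
      inv_neg, inv_inv,
      show (-2:ZMod p) + 1 = -1 from by ring,
      show ((-1:ZMod p))⁻¹ = -1 from by rw [inv_neg, inv_one],
      show (-1:ZMod p) + 1 = 0 from by ring, inv_zero, zero_sub,
      show ((-1:ZMod p))⁻¹ = -1 from by rw [inv_neg, inv_one]]
    ring
  · rw [Equiv.swap_apply_of_ne_of_ne hx2 hx3, Equiv.swap_apply_of_ne_of_ne hx0 hx1]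
    have h1x : (1 : ZMod p) - x ≠ 0 := sub_ne_zero.mpr (Ne.symm hx1)
    have h2x : (2 : ZMod p) - x ≠ 0 := sub_ne_zero.mpr (Ne.symm hx2)
    have h3x : (3 : ZMod p) - x ≠ 0 := sub_ne_zero.mpr (Ne.symm hx3)
    have s1 : x⁻¹ - 1 = (1 - x) / x := by field_simp
    have s2 : ((1 - x) / x)⁻¹ + 1 = (1 - x)⁻¹ := by
      rw [inv_div, div_add' _ _ _ h1x, inv_eq_one_div, div_eq_div_iff h1x h1x]
      ring
    have s3 : ((1 - x)⁻¹)⁻¹ + 1 = 2 - x := by rw [inv_inv]; ring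
    have s4 : (2 - x)⁻¹ + 1 = (3 - x) / (2 - x) := by field_simp; ring
    have s5 : ((3 - x) / (2 - x))⁻¹ - 1 = -(3 - x)⁻¹ := by
      rw [inv_div]
      field_simp
      ring
    have s6 : (-(3 - x)⁻¹)⁻¹ + 1 + 1 + 1 = x := by
      rw [inv_neg, inv_inv]; ring
    rw [s1, s2, s3, s4, s5, s6]
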